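/- arXiv:1109.6479 — 3 statements merged into one kernel-verified Lean document; each statement's English description precedes it below -/
import Mathlib

section
/- Let H₀ be a finite-rank free ℤ-module, K a commutative ring with unit, H = H₀ ⊗ K, and T̂ = ∏_{m≥0} H^{⊗m} the completed tensor algebra. If X' ∈ H₀ is a primitive element (i.e. part of some ℤ-basis, equivalently H₀/ℤX' is torsion-free) and X = X' ⊗ 1 ∈ H, then the centralizer of X in T̂ equals the ring K[[X]] of formal power series in X: {u ∈ T̂ : Xu = uX} = K[[X]]. -/
/-! We model the completed tensor algebra `T̂ = ∏ₘ H^{⊗m}` of a free module `H`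
with basis `ι` concretely: an element of `T̂` is a function assigning to each
word in the alphabet `ι` (a basis element of `H^{⊗m}`, `m` the length) its
coefficient.  Addition and scalar multiplication are pointwise, and
multiplication is the (componentwise finite) convolution over splittings of a
word, i.e. the completed tensor product multiplication. -/

/-- The completed tensor algebra on the free module with basis `ι`,
coefficients in `K`. -/
abbrev NCSeries (ι K : Type*) := List ι → K

variable {ι K : Type*} [CommRing K]

/-- The unit of `T̂`. -/
def oneNC : NCSeries ι K := fun w =>
  match w with
  | [] => 1
  | _ => 0

/-- The multiplication of `T̂`. -/
def mulNC (f g : NCSeries ι K) : NCSeries ι K := fun w =>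
  ∑ k ∈ Finset.range (w.length + 1), f (w.take k) * g (w.drop k)

/-- Powers in `T̂`. -/
def pwNC (X : NCSeries ι K) : ℕ → NCSeries ι K
  | 0 => oneNC
  | n + 1 => mulNC X (pwNC X n)

/-- The element of `T̂` of degree 1 determined by an element `X'` of the free
`ℤ`-module `H₀ = ι →₀ ℤ`, i.e. the image `X = X' ⊗ 1 ∈ H ⊆ T̂`. -/
def degreeOne (X' : ι →₀ ℤ) : NCSeries ι K := fun w =>
  match w with
  | [i] => (X' i : K)
  | _ => 0

/-- The formal power series `Σₙ aₙ Xⁿ ∈ K[[X]]` (the sum is componentwise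
finite whenever `X` has vanishing constant term, as the truncation at the
length of the word shows). -/
def seriesInNC (a : ℕ → K) (X : NCSeries ι K) : NCSeries ι K := fun w =>
  ∑ n ∈ Finset.range (w.length + 1), a n * pwNC X n w

namespace CentralizerAux

def cc (X' : ι →₀ ℤ) : List ι → K := fun w => (w.map fun i => ((X' i : ℤ) : K)).prod

@[simp] lemma cc_nil (X' : ι →₀ ℤ) : cc (K := K) X' [] = 1 := rfl

@[simp] lemma cc_cons (X' : ι →₀ ℤ) (i : ι) (t : List ι) :
    cc (K := K) X' (i :: t) = (X' i : K) * cc X' t := by simp [cc]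

@[simp] lemma cc_append (X' : ι →₀ ℤ) (s t : List ι) :
    cc (K := K) X' (s ++ t) = cc X' s * cc X' t := by simp [cc]

lemma deg_eq_zero (X' : ι →₀ ℤ) {w : List ι} (h : w.length ≠ 1) :
    degreeOne (K := K) X' w = 0 := by
  match w with
  | [] => rfl
  | [i] => simp at h
  | a :: b :: l => rfl

lemma deg_single (X' : ι →₀ ℤ) (i : ι) : degreeOne (K := K) X' [i] = (X' i : K) := rfl

lemma mul_deg_left (X' : ι →₀ ℤ) (g : NCSeries ι K) (i : ι) (t : List ι) :
    mulNC (degreeOne X') g (i :: t) = (X' i : K) * g t := by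
  unfold mulNC
  rw [Finset.sum_eq_single_of_mem 1 (by simp [Finset.mem_range])]
  · simp [degreeOne]
  · intro k hk hne
    have hl : ((i :: t).take k).length ≠ 1 := by
      rw [List.length_take]
      simp only [Finset.mem_range, List.length_cons] at hk ⊢
      omega
    rw [deg_eq_zero X' hl, zero_mul]

lemma mul_deg_right (X' : ι →₀ ℤ) (g : NCSeries ι K) (s : List ι) (j : ι) :
    mulNC g (degreeOne X') (s ++ [j]) = g s * (X' j : K) := by
  unfold mulNC
  rw [Finset.sum_eq_single_of_mem s.length (by simp [Finset.mem_range])]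
  · rw [List.take_left, List.drop_left]; rfl
  · intro k hk hne
    have hl : ((s ++ [j]).drop k).length ≠ 1 := by
      rw [List.length_drop]
      simp only [Finset.mem_range, List.length_append, List.length_singleton] at hk ⊢
      omega
    rw [deg_eq_zero X' hl, mul_zero]

lemma mul_deg_left_nil (X' : ι →₀ ℤ) (g : NCSeries ι K) :
    mulNC (degreeOne X') g [] = 0 := by
  simp [mulNC, deg_eq_zero]

lemma mul_deg_right_nil (X' : ι →₀ ℤ) (g : NCSeries ι K) :
    mulNC g (degreeOne X') [] = 0 := by
  simp [mulNC, deg_eq_zero]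

lemma pw_eq (X' : ι →₀ ℤ) (n : ℕ) (w : List ι) :
    pwNC (degreeOne (K := K) X') n w = if w.length = n then cc X' w else 0 := by
  induction n generalizing w with
  | zero =>
    cases w with
    | nil => simp [pwNC, oneNC]
    | cons i t => simp [pwNC, oneNC]
  | succ n ih =>
    show mulNC _ _ w = _
    cases w with
    | nil => simp [mul_deg_left_nil]
    | cons i t =>
      rw [mul_deg_left, ih]
      by_cases h : t.length = n
      · simp [h]
      · simp [h, fun hh => h (Nat.succ_injective hh)]

lemma series_eq (X' : ι →₀ ℤ) (a : ℕ → K) (w : List ι) :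
    seriesInNC a (degreeOne X') w = a w.length * cc X' w := by
  unfold seriesInNC
  rw [Finset.sum_eq_single_of_mem w.length (by simp)]
  · rw [pw_eq, if_pos rfl]
  · intro k hk hne
    rw [pw_eq, if_neg (Ne.symm hne), mul_zero]

lemma swap (X' : ι →₀ ℤ) (u : NCSeries ι K)
    (R : ∀ (i : ι) (t : List ι) (j : ι),
      (X' i : K) * u (t ++ [j]) = (X' j : K) * u (i :: t)) :
    ∀ (n : ℕ) (v s w : List ι), v.length = n → w.length = n →
      cc X' v * u (s ++ w) = cc X' w * u (v ++ s) := by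
  intro n
  induction n with
  | zero =>
    intro v s w hv hw
    rw [List.length_eq_zero_iff] at hv hw
    subst hv; subst hw; simp
  | succ n ih =>
    intro v s w hv hw
    rcases w.eq_nil_or_concat' with rfl | ⟨w', j, rfl⟩
    · simp at hw
    rcases v.eq_nil_or_concat' with rfl | ⟨v', i, rfl⟩
    · simp at hv
    have hv' : v'.length = n := by simpa using hv
    have hw' : w'.length = n := by simpa using hw
    have h2 : i :: (s ++ w') = (i :: s) ++ w' := rfl
    calc cc X' (v' ++ [i]) * u (s ++ (w' ++ [j]))
        = cc X' v' * ((X' i : K) * u ((s ++ w') ++ [j])) := by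
          rw [← List.append_assoc]; simp [cc_append]; ring
      _ = cc X' v' * ((X' j : K) * u (i :: (s ++ w'))) := by rw [R]
      _ = (X' j : K) * (cc X' v' * u ((i :: s) ++ w')) := by rw [← h2]; ring
      _ = (X' j : K) * (cc X' w' * u (v' ++ (i :: s))) := by rw [ih v' (i :: s) w' hv' hw']
      _ = cc X' (w' ++ [j]) * u ((v' ++ [i]) ++ s) := by
          rw [List.append_assoc]; simp [cc_append]; ring

end CentralizerAux

/-- let `H₀` be a finite-rank free `ℤ`-module (modelled as
`ι →₀ ℤ` for a finite basis type `ι`), `K` a commutative ring, and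
`X' ∈ H₀` a primitive element (i.e. there is a `ℤ`-linear functional taking the
value `1` on it, equivalently `X'` is part of a `ℤ`-basis).  Then the
centralizer in `T̂` of `X = X' ⊗ 1 ∈ H` is exactly the ring `K[[X]]` of formal
power series in `X`. -/
theorem centralizer_primitive_degreeOne_eq_powerSeries
    [Fintype ι] (X' : ι →₀ ℤ)
    (hX : ∃ φ : (ι →₀ ℤ) →ₗ[ℤ] ℤ, φ X' = 1) :
    {u : NCSeries ι K | mulNC (degreeOne X') u = mulNC u (degreeOne X')} =
      {u : NCSeries ι K | ∃ a : ℕ → K, u = seriesInNC a (degreeOne X')} := by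
  classical
  open CentralizerAux in
  obtain ⟨φ, hφ⟩ := hX
  set m : ι → ℤ := fun i => φ (Finsupp.single i 1) with hm
  have hX'eq : X' = ∑ i : ι, Finsupp.single i (X' i) := by
    ext j
    rw [Finsupp.finset_sum_apply]
    simp [Finsupp.single_apply]
  have h1 : (1 : ℤ) = ∑ i : ι, X' i * m i := by
    rw [← hφ]
    conv_lhs => rw [hX'eq]
    rw [map_sum]
    refine Finset.sum_congr rfl fun i _ => ?_
    rw [show Finsupp.single i (X' i) = (X' i) • Finsupp.single i (1 : ℤ) by
      rw [Finsupp.smul_single]; simp, map_smul]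
    simp [hm]
  have hK : (∑ i : ι, (m i : K) * (X' i : K)) = 1 := by
    have h2 : ((∑ i : ι, X' i * m i : ℤ) : K) = 1 := by rw [← h1]; norm_num
    push_cast at h2
    rw [← h2]
    exact Finset.sum_congr rfl fun i _ => mul_comm _ _
  have key : ∀ n : ℕ,
      ∑ f : Fin n → ι, (∏ j, (m (f j) : K)) * cc X' (List.ofFn f) = 1 := by
    intro n
    have hp := Fintype.sum_pow (fun i : ι => (m i : K) * (X' i : K)) n
    rw [hK, one_pow] at hp
    rw [hp]
    refine Finset.sum_congr rfl fun f _ => ?_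
    rw [show cc (K := K) X' (List.ofFn f) = ∏ j, (X' (f j) : K) by
      simp [cc, List.map_ofFn, List.prod_ofFn, Function.comp]]
    rw [← Finset.prod_mul_distrib]
  ext u
  simp only [Set.mem_setOf_eq]
  constructor
  · intro h
    have R : ∀ (i : ι) (t : List ι) (j : ι),
        (X' i : K) * u (t ++ [j]) = (X' j : K) * u (i :: t) := by
      intro i t j
      have h0 := congrFun h (i :: (t ++ [j]))
      rw [mul_deg_left] at h0
      rw [show i :: (t ++ [j]) = (i :: t) ++ [j] from rfl, mul_deg_right] at h0
      rw [h0]; ring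
    refine ⟨fun n => ∑ f : Fin n → ι, (∏ j, (m (f j) : K)) * u (List.ofFn f), ?_⟩
    funext w
    rw [series_eq]
    have hS : ∀ f : Fin w.length → ι,
        u (List.ofFn f) * cc X' w = cc X' (List.ofFn f) * u w := by
      intro f
      have := swap X' u R w.length (List.ofFn f) [] w (by simp) rfl
      simp only [List.nil_append, List.append_nil] at this
      rw [mul_comm (u (List.ofFn f)) (cc X' w)]
      exact this.symm
    rw [Finset.sum_mul]
    calc u w = 1 * u w := (one_mul _).symm
      _ = (∑ f : Fin w.length → ι, (∏ j, (m (f j) : K)) * cc X' (List.ofFn f)) * u w := by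
          rw [key]
      _ = ∑ f : Fin w.length → ι, (∏ j, (m (f j) : K)) * u (List.ofFn f) * cc X' w := by
          rw [Finset.sum_mul]
          refine Finset.sum_congr rfl fun f _ => ?_
          rw [mul_assoc, mul_assoc, hS]
  · rintro ⟨a, rfl⟩
    funext w
    cases w with
    | nil => rw [mul_deg_left_nil, mul_deg_right_nil]
    | cons i t =>
      rw [mul_deg_left]
      rcases t.eq_nil_or_concat' with rfl | ⟨s, j, rfl⟩
      · rw [show [i] = ([] : List ι) ++ [i] from rfl, mul_deg_right]
        simp only [series_eq]
        simp; ring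
      · rw [show i :: (s ++ [j]) = (i :: s) ++ [j] from rfl, mul_deg_right]
        simp only [series_eq]
        rw [show (s ++ [j]).length = (i :: s).length by simp]
        simp only [cc_cons, cc_append, cc_nil, List.length_singleton]
        ring
end

section
/- Let M be a ℚ-vector space with a decreasing filtration M = F₀M ⊇ F₁M ⊇ … that is separated (⋂ₚ FₚM = 0) and complete (M ≅ lim← M/FₚM). Let (pₙ) be a sequence of natural numbers tending to infinity and (aₙ) a sequence in M with aₙ ∈ F_{pₙ}M for each n, so that for every x ∈ ℚ the series Σₙ aₙ xⁿ converges in M. If there exists an infinite subset X ⊆ ℚ such that Σₙ aₙ xⁿ = 0 for all x ∈ X, then aₙ = 0 for all n. -/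
open Finset

/-- Convergence of a sequence `s` to `L` in the topology defined by a decreasing
filtration `F` on a module: for every `k` the tail of `s - L` lies in `F k`. -/
def IsFilteredLimit {M : Type*} [AddCommGroup M] [Module ℚ M]
    (F : ℕ → Submodule ℚ M) (s : ℕ → M) (L : M) : Prop :=
  ∀ k : ℕ, ∃ N : ℕ, ∀ m : ℕ, N ≤ m → s m - L ∈ F k

/-- Vandermonde trick: if `∑ j, x i ^ j • b j = 0` for distinct `x i`, then all `b j = 0`. -/
lemma vandermonde_trick {Q : Type*} [AddCommGroup Q] [Module ℚ Q]
    {N : ℕ} (x : Fin N → ℚ) (hx : Function.Injective x)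
    (b : Fin N → Q) (h : ∀ i, ∑ j : Fin N, x i ^ (j : ℕ) • b j = 0) :
    ∀ j, b j = 0 := by
  have hdet : (Matrix.vandermonde x).det ≠ 0 := by
    rw [Matrix.det_vandermonde]
    refine Finset.prod_ne_zero_iff.2 fun i _ => Finset.prod_ne_zero_iff.2 fun j hj => ?_
    have hij : i < j := Finset.mem_Ioi.mp hj
    exact sub_ne_zero_of_ne (fun e => absurd (hx e) (ne_of_gt hij))
  have hWV : (Matrix.vandermonde x)⁻¹ * Matrix.vandermonde x = 1 :=
    Matrix.nonsing_inv_mul _ (isUnit_iff_ne_zero.2 hdet)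
  intro j
  have h1 : b j = ∑ l, ((Matrix.vandermonde x)⁻¹ * Matrix.vandermonde x) j l • b l := by
    rw [hWV]
    simp [Matrix.one_apply]
  rw [h1]
  have h2 : ∀ l, ((Matrix.vandermonde x)⁻¹ * Matrix.vandermonde x) j l • b l
      = ∑ i, (Matrix.vandermonde x)⁻¹ j i • (x i ^ (l : ℕ) • b l) := by
    intro l
    rw [Matrix.mul_apply, Finset.sum_smul]
    simp [Matrix.vandermonde_apply, mul_smul]
  simp_rw [h2]
  rw [Finset.sum_comm]
  simp_rw [← Finset.smul_sum, h]
  simp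

/-- let `M` be a filtered ℚ-vector space, with decreasing, separated
and complete filtration `F`, `(pₙ)` a sequence of naturals tending to infinity and
`(aₙ)` a sequence with `aₙ ∈ F_{pₙ} M`.  If the series `Σₙ aₙ xⁿ` converges to `0`
for all `x` in some infinite subset `X ⊆ ℚ`, then `aₙ = 0` for all `n`. -/
theorem eq_zero_of_series_vanishes_on_infinite_set
    {M : Type*} [AddCommGroup M] [Module ℚ M]
    (F : ℕ → Submodule ℚ M)
    (hF0 : F 0 = ⊤)
    (hanti : ∀ n, F (n + 1) ≤ F n)
    (hsep : ∀ x : M, (∀ n, x ∈ F n) → x = 0)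
    (hcomplete : ∀ s : ℕ → M, (∀ n, s (n + 1) - s n ∈ F n) →
      ∃ L, ∀ n, ∃ N, ∀ m, N ≤ m → s m - L ∈ F n)
    (p : ℕ → ℕ) (hp : Filter.Tendsto p Filter.atTop Filter.atTop)
    (a : ℕ → M) (ha : ∀ n, a n ∈ F (p n))
    (X : Set ℚ) (hX : X.Infinite)
    (hvanish : ∀ x ∈ X,
      IsFilteredLimit F (fun N => ∑ n ∈ Finset.range (N + 1), x ^ n • a n) 0) :
    ∀ n, a n = 0 := by
  have hmono : Antitone F := antitone_nat_of_succ_le hanti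
  intro n
  apply hsep
  intro k
  obtain ⟨N0, hN0⟩ := (hp.eventually_ge_atTop k).exists_forall_of_atTop
  set N := max N0 (n + 1) with hNdef
  -- partial sums up to N lie in F k for each x ∈ X
  have hpart : ∀ x ∈ X, (∑ j ∈ Finset.range N, x ^ j • a j) ∈ F k := by
    intro x hx
    obtain ⟨N', hN'⟩ := hvanish x hx k
    set m := max N' N with hm
    have h1 : (∑ j ∈ Finset.range (m + 1), x ^ j • a j) ∈ F k := by
      have := hN' m (le_max_left _ _)
      simpa using this
    have hsub : Finset.range N ⊆ Finset.range (m + 1) :=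
      Finset.range_subset_range.2 (le_trans (le_max_right N' N) (Nat.le_succ_of_le le_rfl) |>.trans le_rfl)
    have hsplit := Finset.sum_sdiff (f := fun j => x ^ j • a j) hsub
    have htail : (∑ j ∈ Finset.range (m + 1) \ Finset.range N, x ^ j • a j) ∈ F k := by
      apply Submodule.sum_mem
      intro j hj
      have hjN : N ≤ j := by
        simp only [Finset.mem_sdiff, Finset.mem_range, not_lt] at hj
        exact hj.2
      have : k ≤ p j := hN0 j (le_trans (le_max_left _ _) hjN)
      exact Submodule.smul_mem _ _ (hmono this (ha j))
    have : (∑ j ∈ Finset.range N, x ^ j • a j)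
        = (∑ j ∈ Finset.range (m + 1), x ^ j • a j)
          - ∑ j ∈ Finset.range (m + 1) \ Finset.range N, x ^ j • a j := by
      rw [← hsplit, add_sub_cancel_left]
    rw [this]
    exact Submodule.sub_mem _ h1 htail
  -- pass to the quotient and use Vandermonde
  let e := hX.natEmbedding
  let xs : Fin N → ℚ := fun i => (e i : ℚ)
  have hxs : Function.Injective xs := by
    intro i j h
    exact Fin.val_injective (e.injective (Subtype.ext h))
  let π := (F k).mkQ
  have hsum0 : ∀ i : Fin N, ∑ j : Fin N, (xs i) ^ (j : ℕ) • π (a j) = 0 := by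
    intro i
    have h0 := hpart (xs i) (e i).2
    have hq : π (∑ j ∈ Finset.range N, (xs i) ^ j • a j) = 0 := by
      rw [Submodule.mkQ_apply, Submodule.Quotient.mk_eq_zero]
      exact h0
    rw [map_sum] at hq
    rw [← Fin.sum_univ_eq_sum_range (fun j => π ((xs i) ^ j • a j)) N] at hq
    simpa using hq
  have hb := vandermonde_trick xs hxs (fun j : Fin N => π (a j)) hsum0
  have hn : n < N := lt_of_lt_of_le (Nat.lt_succ_self n) (le_max_right _ _)
  have := hb ⟨n, hn⟩
  simpa [π, Submodule.Quotient.mk_eq_zero] using this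
end

section
/- Let H be a module over a commutative ring K containing ℚ, T̂ = ∏_{m≥0} H^{⊗m} the completed tensor algebra with T̂₁ = ∏_{m≥1} H^{⊗m}, and let N: T̂ → T̂ be the K-linear cyclic symmetrization map defined by N = 0 on H^{⊗0} and N(X₁⋯Xₙ) = Σ_{i=1}^{n} Xᵢ⋯XₙX₁⋯X_{i−1} for Xⱼ ∈ H. Then the sequence 0 → K·1 ⊕ [T̂, T̂] → T̂ → N(T̂₁) → 0 is exact, i.e. the kernel of N equals K·1 plus the closure of the span of commutators [u,v] = uv − vu. -/
variable {ι K : Type*} [CommRing K]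

/-- The cyclic symmetrization `N : T̂ → T̂`, with `N = 0` on `H^{⊗0}` and
`N(X₁⋯Xₙ) = Σᵢ Xᵢ⋯XₙX₁⋯X_{i−1}` on `H^{⊗n}`; dually, on coefficient
functions, `(Nf)(w) = Σᵢ f(rotate w i)`. -/
def cyclicN (f : NCSeries ι K) : NCSeries ι K := fun w =>
  match w with
  | [] => 0
  | w => ∑ i ∈ Finset.range w.length, f (w.rotate i)

/-- The set of commutators `uv − vu` in `T̂`. -/
def ncCommutatorSet (ι K : Type*) [CommRing K] : Set (NCSeries ι K) :=
  {z | ∃ u v : NCSeries ι K, z = mulNC u v - mulNC v u}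

/-- The closure of a subset of `T̂` in the topology of the filtration by the
two-sided ideals `T̂ₚ = ∏_{m ≥ p} H^{⊗m}` (equivalently, the product topology
with `K` discrete): `f` lies in the closure of `S` iff on every finite set of
words it agrees with some element of `S`. -/
def filteredClosure (S : Set (NCSeries ι K)) : Set (NCSeries ι K) :=
  {f | ∀ L : Finset (List ι), ∃ g ∈ S, ∀ w ∈ L, f w = g w}

/- ---------------------------------------------------------------------- -/
/- Auxiliary material -/

lemma cyclicN_apply (f : NCSeries ι K) (w : List ι) :
    cyclicN f w = ∑ i ∈ Finset.range w.length, f (w.rotate i) := by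
  cases w <;> simp [cyclicN]

/-- The indicator series of a single word. -/
def deltaNC [DecidableEq ι] (v : List ι) : NCSeries ι K := fun w =>
  if w = v then 1 else 0

lemma mulNC_delta [DecidableEq ι] (u v : List ι) :
    mulNC (deltaNC u) (deltaNC v) = (deltaNC (u ++ v) : NCSeries ι K) := by
  funext w
  have : ∀ k ∈ Finset.range (w.length + 1),
      (deltaNC u (w.take k) : K) * deltaNC v (w.drop k)
        = if k = u.length ∧ w = u ++ v then 1 else 0 := by
    intro k hk
    rw [Finset.mem_range] at hk
    simp only [deltaNC, ite_mul, one_mul, zero_mul, mul_ite, mul_one, mul_zero]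
    by_cases h1 : w.take k = u
    · by_cases h2 : w.drop k = v
      · have hw : w = u ++ v := by rw [← h1, ← h2, List.take_append_drop]
        have hkl : k = u.length := by
          have := congrArg List.length h1
          simp only [List.length_take] at this
          omega
        simp [h1, h2, hw, hkl]
      · have : ¬ (k = u.length ∧ w = u ++ v) := by
          rintro ⟨hkl, hw⟩
          apply h2
          rw [hw, hkl, List.drop_left]
        simp [h1, h2, this]
    · have : ¬ (k = u.length ∧ w = u ++ v) := by
        rintro ⟨hkl, hw⟩
        apply h1
        rw [hw, hkl, List.take_left]
      simp [h1, this]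
  rw [mulNC, Finset.sum_congr rfl this]
  by_cases hw : w = u ++ v
  · simp only [hw, and_true]
    rw [Finset.sum_ite_eq' (Finset.range ((u ++ v).length + 1)) u.length fun _ => (1 : K)]
    simp [deltaNC, hw, Nat.lt_succ_iff]
  · simp [hw, deltaNC]

lemma delta_sub_rotate_mem [DecidableEq ι] (w : List ι) (i : ℕ) (hi : i ≤ w.length) :
    (deltaNC w - deltaNC (w.rotate i) : NCSeries ι K) ∈ ncCommutatorSet ι K := by
  refine ⟨deltaNC (w.take i), deltaNC (w.drop i), ?_⟩
  rw [mulNC_delta, mulNC_delta, List.take_append_drop,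
    List.rotate_eq_drop_append_take hi]

/-- `cyclicN` as a linear map. -/
def cyclicNL : NCSeries ι K →ₗ[K] NCSeries ι K where
  toFun := cyclicN
  map_add' f g := by
    funext w
    simp [cyclicN_apply, Finset.sum_add_distrib]
  map_smul' r f := by
    funext w
    simp [cyclicN_apply, Finset.mul_sum]

/-- `N` kills every commutator. -/
lemma cyclicN_commutator (u v : NCSeries ι K) :
    cyclicN (mulNC u v - mulNC v u) = 0 := by
  funext w
  simp only [cyclicN_apply, Pi.sub_apply, Pi.zero_apply, Finset.sum_sub_distrib]
  rw [sub_eq_zero]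
  set n := w.length with hn
  rcases Nat.eq_zero_or_pos n with h0 | hpos
  · simp [h0]
  have hlen : ∀ i : ℕ, (w.rotate i).length = n := fun i => by
    simp [List.length_rotate, hn]
  have key : ∀ (a b : NCSeries ι K),
      ∑ i ∈ Finset.range n, mulNC a b (w.rotate i)
        = ∑ p ∈ Finset.range n ×ˢ Finset.range (n + 1),
            a ((w.rotate p.1).take p.2) * b ((w.rotate p.1).drop p.2) := by
    intro a b
    rw [Finset.sum_product]
    refine Finset.sum_congr rfl fun i _ => ?_
    rw [mulNC, hlen i]
  rw [key u v, key v u]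
  refine Finset.sum_nbij' (fun p => ((p.1 + p.2) % n, n - p.2))
    (fun p => ((p.1 + p.2) % n, n - p.2)) ?_ ?_ ?_ ?_ ?_
  · rintro ⟨a, k⟩ hp
    simp only [Finset.mem_product, Finset.mem_range] at hp ⊢
    exact ⟨Nat.mod_lt _ hpos, by omega⟩
  · rintro ⟨a, k⟩ hp
    simp only [Finset.mem_product, Finset.mem_range] at hp ⊢
    exact ⟨Nat.mod_lt _ hpos, by omega⟩
  · rintro ⟨a, k⟩ hp
    simp only [Finset.mem_product, Finset.mem_range] at hp
    obtain ⟨ha, hk⟩ := hp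
    have hk' : k ≤ n := by omega
    have h1 : ((a + k) % n + (n - k)) % n = a := by
      rw [Nat.mod_add_mod]
      have : a + k + (n - k) = a + n := by omega
      rw [this, Nat.add_mod_right, Nat.mod_eq_of_lt ha]
    have h2 : n - (n - k) = k := by omega
    simp [h1, h2]
  · rintro ⟨a, k⟩ hp
    simp only [Finset.mem_product, Finset.mem_range] at hp
    obtain ⟨ha, hk⟩ := hp
    have h1 : ((a + k) % n + (n - k)) % n = a := by
      rw [Nat.mod_add_mod]
      have : a + k + (n - k) = a + n := by omega
      rw [this, Nat.add_mod_right, Nat.mod_eq_of_lt ha]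
    have h2 : n - (n - k) = k := by omega
    simp [h1, h2]
  · rintro ⟨a, k⟩ hp
    simp only [Finset.mem_product, Finset.mem_range] at hp
    obtain ⟨ha, hk⟩ := hp
    have hk' : k ≤ n := by omega
    have hrot : w.rotate ((a + k) % n) = (w.rotate a).rotate k := by
      rw [List.rotate_rotate, hn, List.rotate_mod]
    have hl : (w.rotate a).length = n := hlen a
    have hsplit : (w.rotate a).rotate k
        = (w.rotate a).drop k ++ (w.rotate a).take k :=
      List.rotate_eq_drop_append_take (by omega)
    have htake : ((w.rotate a).rotate k).take (n - k) = (w.rotate a).drop k := by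
      rw [hsplit]
      have : n - k = ((w.rotate a).drop k).length := by
        simp [List.length_drop, hl]
      rw [this, List.take_left]
    have hdrop : ((w.rotate a).rotate k).drop (n - k) = (w.rotate a).take k := by
      rw [hsplit]
      have : n - k = ((w.rotate a).drop k).length := by
        simp [List.length_drop, hl]
      rw [this, List.drop_left]
    simp only [hrot, htake, hdrop]
    ring

lemma cyclicN_eq_zero_of_mem_span {p : NCSeries ι K}
    (hp : p ∈ Submodule.span K (ncCommutatorSet ι K)) : cyclicN p = 0 := by
  have : Submodule.span K (ncCommutatorSet ι K) ≤ LinearMap.ker (cyclicNL (ι := ι) (K := K)) := by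
    rw [Submodule.span_le]
    rintro z ⟨u, v, rfl⟩
    exact cyclicN_commutator u v
  exact this hp

/-- Key finite-support lemma: a finitely supported series, supported away from
the empty word on a rotation-closed set, killed by `N`, lies in the span of
commutators. -/
lemma mem_span_of_finite [DecidableEq ι] [Algebra ℚ K] (T : Finset (List ι))
    (hT : ∀ w ∈ T, ∀ i, w.rotate i ∈ T) (hne : ∀ w ∈ T, w ≠ [])
    (h : NCSeries ι K) (hsupp : ∀ w, w ∉ T → h w = 0)
    (hker : cyclicN h = 0) :
    h ∈ Submodule.span K (ncCommutatorSet ι K) := by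
  classical
  set c : List ι → K := fun w => algebraMap ℚ K ((w.length : ℚ)⁻¹) * h w with hc
  have key : h = ∑ w ∈ T, ∑ i ∈ Finset.range w.length,
      c w • (deltaNC w - deltaNC (w.rotate i)) := by
    funext u
    have expand : (∑ w ∈ T, ∑ i ∈ Finset.range w.length,
        c w • (deltaNC w - deltaNC (w.rotate i) : NCSeries ι K)) u
        = ∑ w ∈ T, ∑ i ∈ Finset.range w.length,
            (c w * deltaNC w u - c w * deltaNC (w.rotate i) u) := by
      rw [Finset.sum_apply]
      refine Finset.sum_congr rfl fun w _ => ?_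
      rw [Finset.sum_apply]
      refine Finset.sum_congr rfl fun i _ => ?_
      simp [mul_sub]
    rw [expand]
    simp only [Finset.sum_sub_distrib]
    by_cases hu : u ∈ T
    · have hune : u ≠ [] := hne u hu
      have hnu : 0 < u.length := List.length_pos_iff.mpr hune
      -- first part
      have p1 : ∑ w ∈ T, ∑ i ∈ Finset.range w.length, c w * deltaNC w u = h u := by
        have step : ∀ w ∈ T, ∑ i ∈ Finset.range w.length, c w * deltaNC w u
            = if u = w then (w.length : K) * c w else 0 := by
          intro w _
          rw [Finset.sum_const, nsmul_eq_mul]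
          simp only [deltaNC]
          by_cases huw : u = w
          · simp [huw]
          · simp [huw]
        rw [Finset.sum_congr rfl step, Finset.sum_ite_eq T u fun w => (w.length : K) * c w,
          if_pos hu, hc]
        have : (u.length : K) = algebraMap ℚ K (u.length : ℚ) := by
          simp
        rw [this, ← mul_assoc, ← map_mul, mul_inv_cancel₀ (by exact_mod_cast hnu.ne'),
          map_one, one_mul]
      -- second part
      have p2 : ∑ w ∈ T, ∑ i ∈ Finset.range w.length, c w * deltaNC (w.rotate i) u = 0 := by
        have stepA : ∀ w ∈ T, ∑ i ∈ Finset.range w.length, c w * deltaNC (w.rotate i) u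
            = ∑ i ∈ Finset.range u.length, (if w = u.rotate i then c w else 0) := by
          intro w _
          have inner : ∀ i, c w * deltaNC (w.rotate i) u
              = if u = w.rotate i then c w else 0 := by
            intro i
            simp [deltaNC, mul_ite]
          by_cases hlw : w.length = u.length
          · rw [Finset.sum_congr rfl fun i _ => inner i, hlw]
            refine Finset.sum_nbij' (fun i => (u.length - i) % u.length)
              (fun i => (u.length - i) % u.length) ?_ ?_ ?_ ?_ ?_
            · intro i _; exact Finset.mem_range.mpr (Nat.mod_lt _ hnu)
            · intro i _; exact Finset.mem_range.mpr (Nat.mod_lt _ hnu)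
            · intro i hi
              rw [Finset.mem_range] at hi
              rcases Nat.eq_zero_or_pos i with h0 | hip
              · simp [h0]
              · have e1 : (u.length - i) % u.length = u.length - i :=
                  Nat.mod_eq_of_lt (by omega)
                rw [e1]
                have e2 : u.length - (u.length - i) = i := by omega
                rw [e2, Nat.mod_eq_of_lt hi]
            · intro i hi
              rw [Finset.mem_range] at hi
              rcases Nat.eq_zero_or_pos i with h0 | hip
              · simp [h0]
              · have e1 : (u.length - i) % u.length = u.length - i :=
                  Nat.mod_eq_of_lt (by omega)
                rw [e1]
                have e2 : u.length - (u.length - i) = i := by omega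
                rw [e2, Nat.mod_eq_of_lt hi]
            · intro i hi
              rw [Finset.mem_range] at hi
              have hiff : u = w.rotate i ↔ w = u.rotate ((u.length - i) % u.length) := by
                rw [eq_comm, List.rotate_eq_iff, Nat.mod_eq_of_lt (by omega : i < u.length),
                  List.rotate_mod]
              rw [if_congr hiff rfl rfl]
          · rw [Finset.sum_congr rfl fun i _ => inner i]
            rw [Finset.sum_eq_zero, Finset.sum_eq_zero]
            · intro i _
              rw [if_neg]
              intro hcon
              apply hlw
              rw [hcon, List.length_rotate]
            · intro i _
              rw [if_neg]
              intro hcon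
              apply hlw
              rw [hcon, List.length_rotate]
        rw [Finset.sum_congr rfl stepA, Finset.sum_comm]
        have collapse : ∀ i ∈ Finset.range u.length,
            (∑ w ∈ T, if w = u.rotate i then c w else 0) = c (u.rotate i) := by
          intro i _
          rw [Finset.sum_ite_eq' T (u.rotate i) c, if_pos (hT u hu i)]
        rw [Finset.sum_congr rfl collapse]
        have cval : ∀ i, c (u.rotate i)
            = algebraMap ℚ K ((u.length : ℚ)⁻¹) * h (u.rotate i) := by
          intro i
          rw [hc]
          simp [List.length_rotate]
        rw [Finset.sum_congr rfl fun i _ => cval i, ← Finset.mul_sum]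
        have : ∑ i ∈ Finset.range u.length, h (u.rotate i) = 0 := by
          have := congrFun hker u
          rwa [cyclicN_apply, Pi.zero_apply] at this
        rw [this, mul_zero]
      rw [p1, p2, sub_zero]
    · have z1 : ∑ w ∈ T, ∑ i ∈ Finset.range w.length, c w * deltaNC w u = 0 := by
        refine Finset.sum_eq_zero fun w hw => Finset.sum_eq_zero fun i _ => ?_
        have : deltaNC w u = (0 : K) := by
          rw [deltaNC, if_neg]
          rintro rfl
          exact hu hw
        rw [this, mul_zero]
      have z2 : ∑ w ∈ T, ∑ i ∈ Finset.range w.length, c w * deltaNC (w.rotate i) u = 0 := by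
        refine Finset.sum_eq_zero fun w hw => Finset.sum_eq_zero fun i _ => ?_
        have : deltaNC (w.rotate i) u = (0 : K) := by
          rw [deltaNC, if_neg]
          rintro rfl
          exact hu (hT w hw i)
        rw [this, mul_zero]
      rw [z1, z2, sub_zero, hsupp u hu]
  rw [key]
  refine Submodule.sum_mem _ fun w hw => Submodule.sum_mem _ fun i hi => ?_
  exact Submodule.smul_mem _ _ (Submodule.subset_span
    (delta_sub_rotate_mem w i (Finset.mem_range.mp hi).le))

/-- over a commutative ring `K ⊇ ℚ`, the sequence
`0 → K·1 ⊕ [T̂,T̂] → T̂ → N(T̂₁) → 0` is exact; that is, the kernel of the cyclic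
symmetrization `N` is exactly `K·1` plus the closure of the span of
commutators. -/
theorem ker_cyclicN_eq [Fintype ι] [Algebra ℚ K] :
    {f : NCSeries ι K | cyclicN f = 0} =
      {f : NCSeries ι K | ∃ c : K,
        ∃ g ∈ filteredClosure (↑(Submodule.span K (ncCommutatorSet ι K))),
          f = c • oneNC + g} := by
  classical
  ext f
  simp only [Set.mem_setOf_eq]
  constructor
  · intro hf
    refine ⟨f [], f - f [] • oneNC, ?_, by abel⟩
    intro L
    -- the rotation closure of L, without the empty word
    set T : Finset (List ι) :=
      L.biUnion (fun w => (Finset.range w.length).image (w.rotate ·)) with hTdef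
    have hmemT : ∀ v : List ι, v ∈ T ↔ ∃ w ∈ L, ∃ i < w.length, w.rotate i = v := by
      intro v
      simp [hTdef]
    have hTrot : ∀ w ∈ T, ∀ i, w.rotate i ∈ T := by
      intro v hv i
      rw [hmemT] at hv ⊢
      obtain ⟨w, hw, j, hj, rfl⟩ := hv
      refine ⟨w, hw, (j + i) % w.length, Nat.mod_lt _ (by omega), ?_⟩
      rw [List.rotate_mod, List.rotate_rotate]
    have hTne : ∀ w ∈ T, w ≠ [] := by
      intro v hv
      rw [hmemT] at hv
      obtain ⟨w, hw, i, hi, rfl⟩ := hv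
      intro hcon
      have := congrArg List.length hcon
      simp only [List.length_rotate, List.length_nil] at this
      omega
    set g : NCSeries ι K := f - f [] • oneNC with hg
    have hg_empty : g [] = 0 := by
      simp [hg, oneNC]
    have hgN : cyclicN g = 0 := by
      funext w
      rw [cyclicN_apply, Pi.zero_apply]
      rcases eq_or_ne w [] with rfl | hw
      · simp
      · have : ∀ i ∈ Finset.range w.length, g (w.rotate i) = f (w.rotate i) := by
          intro i _
          have hrne : w.rotate i ≠ [] := by
            intro hcon
            apply hw
            have := congrArg List.length hcon
            simp only [List.length_rotate, List.length_nil] at this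
            exact List.length_eq_zero_iff.mp this
          have : oneNC (w.rotate i) = (0 : K) := by
            cases hr : w.rotate i with
            | nil => exact absurd hr hrne
            | cons a t => simp [oneNC]
          simp [hg, this]
        rw [Finset.sum_congr rfl this]
        have := congrFun hf w
        rwa [cyclicN_apply, Pi.zero_apply] at this
    set h : NCSeries ι K := fun w => if w ∈ T then g w else 0 with hh
    have hhspan : h ∈ Submodule.span K (ncCommutatorSet ι K) := by
      refine mem_span_of_finite T hTrot hTne h (fun w hw => by simp [hh, hw]) ?_
      funext w
      rw [cyclicN_apply, Pi.zero_apply]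
      by_cases hw : w ∈ T
      · have : ∀ i ∈ Finset.range w.length, h (w.rotate i) = g (w.rotate i) := by
          intro i _
          simp [hh, hTrot w hw i]
        rw [Finset.sum_congr rfl this]
        have := congrFun hgN w
        rwa [cyclicN_apply, Pi.zero_apply] at this
      · refine Finset.sum_eq_zero fun i hi => ?_
        rw [Finset.mem_range] at hi
        have : w.rotate i ∉ T := by
          intro hcon
          apply hw
          have : (w.rotate i).rotate (w.length - i) = w := by
            rw [List.rotate_rotate, Nat.add_sub_cancel' hi.le, List.rotate_length]
          have h2 := hTrot _ hcon (w.length - i)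
          rwa [this] at h2
        simp [hh, this]
    refine ⟨h, hhspan, ?_⟩
    intro w hw
    rcases eq_or_ne w [] with rfl | hwne
    · have : [] ∉ T := fun hcon => hTne [] hcon rfl
      simp [hh, this, hg_empty]
    · have hwT : w ∈ T := by
        rw [hmemT]
        exact ⟨w, hw, 0, List.length_pos_iff.mpr hwne, List.rotate_zero w⟩
      simp [hh, hwT]
  · rintro ⟨c, g, hgcl, rfl⟩
    funext w
    rw [cyclicN_apply, Pi.zero_apply]
    rcases eq_or_ne w [] with rfl | hw
    · simp
    obtain ⟨p, hp, hagree⟩ := hgcl ((Finset.range w.length).image (w.rotate ·))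
    have step : ∀ i ∈ Finset.range w.length,
        ((c • oneNC + g : NCSeries ι K)) (w.rotate i) = p (w.rotate i) := by
      intro i hi
      have hrne : w.rotate i ≠ [] := by
        intro hcon
        apply hw
        have := congrArg List.length hcon
        simp only [List.length_rotate, List.length_nil] at this
        exact List.length_eq_zero_iff.mp this
      have hone : oneNC (w.rotate i) = (0 : K) := by
        cases hr : w.rotate i with
        | nil => exact absurd hr hrne
        | cons a t => simp [oneNC]
      have hgp : g (w.rotate i) = p (w.rotate i) :=
        hagree _ (Finset.mem_image.mpr ⟨i, hi, rfl⟩)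
      simp [hone, hgp]
    rw [Finset.sum_congr rfl step]
    have hpz : cyclicN p = 0 := cyclicN_eq_zero_of_mem_span hp
    have := congrFun hpz w
    rwa [cyclicN_apply, Pi.zero_apply] at this
end
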